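/- arXiv:1101.4144 — 3 statements merged into one kernel-verified Lean document; each statement's English description precedes it below -/
import Mathlib

section
/- Let W be a weak fundamental localizer and consider a square in Cat given by functors u : A → B, u' : A' → B', v : A' → A, w : B' → B between small categories and a natural transformation α : u ∘ v ⟶ w ∘ u'. The following conditions are equivalent: (a) for every object b' of B', the induced functor A'/b' → A/w(b') is W-coaspherical; (b) for every object a of A, the induced functor a\A' → u(a)\B' is W-aspherical; (c) for every object a of A, every object b' of B' and every morphism g : u(a) → w(b') in B, the category A'_{(a,b',g)} is W-aspherical. -/
open CategoryTheory

universe u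

namespace Paper

/-- A class of functors between small categories. -/
abbrev FunctorClass : Type (u + 1) :=
  ∀ ⦃A B : Type u⦄ [SmallCategory A] [SmallCategory B], (A ⥤ B) → Prop

/-- The punctual category `e`. -/
abbrev PtCat : Type u := Discrete PUnit.{u + 1}

/-- The category `A` is `W`-aspherical: the functor `A ⥤ e` lies in `W`. -/
def IsAsphericalCat (W : FunctorClass.{u}) (A : Type u) [SmallCategory A] : Prop :=
  W (Functor.star A)

/-- The functor `F : A ⥤ B` is `W`-aspherical: every comma category `A/b` is `W`-aspherical. -/
def IsAsphericalFunctor (W : FunctorClass.{u}) {A B : Type u} [SmallCategory A]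
    [SmallCategory B] (F : A ⥤ B) : Prop :=
  ∀ b : B, IsAsphericalCat W (CostructuredArrow F b)

/-- The functor `F : A ⥤ B` is `W`-coaspherical: every comma category `b\A` is `W`-aspherical. -/
def IsCoasphericalFunctor (W : FunctorClass.{u}) {A B : Type u} [SmallCategory A]
    [SmallCategory B] (F : A ⥤ B) : Prop :=
  ∀ b : B, IsAsphericalCat W (StructuredArrow b F)

/-- For `F : A ⥤ B` and `b : B`, the induced functor `A/b ⥤ B/b`. -/
def sliceInduced {A B : Type u} [SmallCategory A] [SmallCategory B] (F : A ⥤ B) (b : B) :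
    CostructuredArrow F b ⥤ Over b where
  obj x := Over.mk x.hom
  map {x y} f := Over.homMk (F.map f.left) (by simp [CostructuredArrow.w f])

/-- For a strictly commutative triangle given by `F : A ⥤ B`, `G : B ⥤ C` and `c : C`,
the induced functor `A/c ⥤ B/c`. -/
def triangleSlice {A B C : Type u} [SmallCategory A] [SmallCategory B] [SmallCategory C]
    (F : A ⥤ B) (G : B ⥤ C) (c : C) :
    CostructuredArrow (F ⋙ G) c ⥤ CostructuredArrow G c where
  obj x := CostructuredArrow.mk (Y := F.obj x.left) x.hom
  map {x y} f := CostructuredArrow.homMk (F.map f.left) (CostructuredArrow.w f)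

/-- For a strictly commutative triangle given by `F : A ⥤ B`, `G : B ⥤ C` and `c : C`,
the induced functor `c\A ⥤ c\B`. -/
def triangleCoslice {A B C : Type u} [SmallCategory A] [SmallCategory B] [SmallCategory C]
    (F : A ⥤ B) (G : B ⥤ C) (c : C) :
    StructuredArrow c (F ⋙ G) ⥤ StructuredArrow c G where
  obj x := StructuredArrow.mk (Y := F.obj x.right) x.hom
  map {x y} f := StructuredArrow.homMk (F.map f.right) (StructuredArrow.w f)


/-- `W` is a weak fundamental localizer. -/
structure IsWeakFundamentalLocalizer (W : FunctorClass.{u}) : Prop where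
  id_mem : ∀ (A : Type u) [SmallCategory A], W (𝟭 A)
  comp_mem : ∀ {A B C : Type u} [SmallCategory A] [SmallCategory B] [SmallCategory C]
      (F : A ⥤ B) (G : B ⥤ C), W F → W G → W (F ⋙ G)
  of_comp_left : ∀ {A B C : Type u} [SmallCategory A] [SmallCategory B] [SmallCategory C]
      (F : A ⥤ B) (G : B ⥤ C), W F → W (F ⋙ G) → W G
  of_comp_right : ∀ {A B C : Type u} [SmallCategory A] [SmallCategory B] [SmallCategory C]
      (F : A ⥤ B) (G : B ⥤ C), W G → W (F ⋙ G) → W F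
  retract_mem : ∀ {A A' : Type u} [SmallCategory A] [SmallCategory A']
      (i : A' ⥤ A) (r : A ⥤ A'), i ⋙ r = 𝟭 A' → W (r ⋙ i) → W r
  star_mem : ∀ (A : Type u) [SmallCategory A], Limits.HasTerminal A → W (Functor.star A)
  mem_of_slices : ∀ {A B : Type u} [SmallCategory A] [SmallCategory B] (F : A ⥤ B),
      (∀ b : B, W (sliceInduced F b)) → W F

/-- `W` is a fundamental localizer. -/
structure IsFundamentalLocalizer (W : FunctorClass.{u}) : Prop where
  id_mem : ∀ (A : Type u) [SmallCategory A], W (𝟭 A)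
  comp_mem : ∀ {A B C : Type u} [SmallCategory A] [SmallCategory B] [SmallCategory C]
      (F : A ⥤ B) (G : B ⥤ C), W F → W G → W (F ⋙ G)
  of_comp_left : ∀ {A B C : Type u} [SmallCategory A] [SmallCategory B] [SmallCategory C]
      (F : A ⥤ B) (G : B ⥤ C), W F → W (F ⋙ G) → W G
  of_comp_right : ∀ {A B C : Type u} [SmallCategory A] [SmallCategory B] [SmallCategory C]
      (F : A ⥤ B) (G : B ⥤ C), W G → W (F ⋙ G) → W F
  retract_mem : ∀ {A A' : Type u} [SmallCategory A] [SmallCategory A']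
      (i : A' ⥤ A) (r : A ⥤ A'), i ⋙ r = 𝟭 A' → W (r ⋙ i) → W r
  star_mem : ∀ (A : Type u) [SmallCategory A], Limits.HasTerminal A → W (Functor.star A)
  mem_of_rel_slices : ∀ {A B C : Type u} [SmallCategory A] [SmallCategory B] [SmallCategory C]
      (F : A ⥤ B) (G : B ⥤ C), (∀ c : C, W (triangleSlice F G c)) → W F


section Squares

variable {A A' B B' : Type u} [SmallCategory A] [SmallCategory A']
  [SmallCategory B] [SmallCategory B']

/-- The functor `A'/b' ⥤ A/w(b')` induced by a square `(u, u', v, w, α)`. -/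
def squareSlice (u : A ⥤ B) (u' : A' ⥤ B') (v : A' ⥤ A) (w : B' ⥤ B)
    (α : v ⋙ u ⟶ u' ⋙ w) (b' : B') :
    CostructuredArrow u' b' ⥤ CostructuredArrow u (w.obj b') where
  obj x := CostructuredArrow.mk (Y := v.obj x.left) (α.app x.left ≫ w.map x.hom)
  map {x y} f := CostructuredArrow.homMk (v.map f.left) (by
    have h := α.naturality f.left
    dsimp at h ⊢
    rw [← Category.assoc, h, Category.assoc, ← Functor.map_comp, CostructuredArrow.w f])

/-- The functor `a\A' ⥤ u(a)\B'` induced by a square `(u, u', v, w, α)`. -/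
def squareCoslice (u : A ⥤ B) (u' : A' ⥤ B') (v : A' ⥤ A) (w : B' ⥤ B)
    (α : v ⋙ u ⟶ u' ⋙ w) (a : A) :
    StructuredArrow a v ⥤ StructuredArrow (u.obj a) w where
  obj x := StructuredArrow.mk (Y := u'.obj x.right) (u.map x.hom ≫ α.app x.right)
  map {x y} f := StructuredArrow.homMk (u'.map f.right) (by
    have h := α.naturality f.right
    dsimp at h ⊢
    rw [Category.assoc, ← h, ← Category.assoc, ← Functor.map_comp, StructuredArrow.w f])

/-- The category `A'_{(a, b', g)}` attached to a square `(u, u', v, w, α)` and a triple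
`(a, b', g : u(a) ⟶ w(b'))`. -/
structure SquareFiber (u : A ⥤ B) (u' : A' ⥤ B') (v : A' ⥤ A) (w : B' ⥤ B)
    (α : v ⋙ u ⟶ u' ⋙ w) (a : A) (b' : B') (g : u.obj a ⟶ w.obj b') : Type u where
  pt : A'
  f : a ⟶ v.obj pt
  g' : u'.obj pt ⟶ b'
  fac : u.map f ≫ α.app pt ≫ w.map g' = g

instance (u : A ⥤ B) (u' : A' ⥤ B') (v : A' ⥤ A) (w : B' ⥤ B)
    (α : v ⋙ u ⟶ u' ⋙ w) (a : A) (b' : B') (g : u.obj a ⟶ w.obj b') :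
    Category (SquareFiber u u' v w α a b' g) where
  Hom x y := { h : x.pt ⟶ y.pt // x.f ≫ v.map h = y.f ∧ u'.map h ≫ y.g' = x.g' }
  id x := ⟨𝟙 x.pt, by simp, by simp⟩
  comp {x y z} f g := ⟨f.1 ≫ g.1, by
      rw [Functor.map_comp, ← Category.assoc, f.2.1, g.2.1], by
      rw [Functor.map_comp, Category.assoc, g.2.2, f.2.2]⟩
  id_comp f := by apply Subtype.ext; simp
  comp_id f := by apply Subtype.ext; simp
  assoc f g h := by apply Subtype.ext; simp

/-- A square `(u, u', v, w, α)` is `W`-exact. -/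
def IsExactSquare (W : FunctorClass.{u}) (u : A ⥤ B) (u' : A' ⥤ B') (v : A' ⥤ A)
    (w : B' ⥤ B) (α : v ⋙ u ⟶ u' ⋙ w) : Prop :=
  ∀ b' : B', IsCoasphericalFunctor W (squareSlice u u' v w α b')

/-- The 2-cell of the opposite square. -/
def squareOpCell (u : A ⥤ B) (u' : A' ⥤ B') (v : A' ⥤ A) (w : B' ⥤ B)
    (α : v ⋙ u ⟶ u' ⋙ w) : u'.op ⋙ w.op ⟶ v.op ⋙ u.op :=
  NatTrans.op α

end Squares

section Comps

/-- The 2-cell of the horizontal composite of two squares. -/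
def hcomp2cell {A A' A'' B B' B'' : Type u}
    [SmallCategory A] [SmallCategory A'] [SmallCategory A'']
    [SmallCategory B] [SmallCategory B'] [SmallCategory B'']
    {u : A ⥤ B} {u' : A' ⥤ B'} {u'' : A'' ⥤ B''}
    {v : A' ⥤ A} {w : B' ⥤ B} {v' : A'' ⥤ A'} {w' : B'' ⥤ B'}
    (α : v ⋙ u ⟶ u' ⋙ w) (α' : v' ⋙ u' ⟶ u'' ⋙ w') :
    (v' ⋙ v) ⋙ u ⟶ u'' ⋙ (w' ⋙ w) :=
  Functor.whiskerLeft v' α ≫ Functor.whiskerRight α' w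

/-- The 2-cell of the vertical composite of two squares. -/
def vcomp2cell {A A' B B' C C' : Type u}
    [SmallCategory A] [SmallCategory A'] [SmallCategory B] [SmallCategory B']
    [SmallCategory C] [SmallCategory C']
    {u : A ⥤ B} {u' : A' ⥤ B'} {v : A' ⥤ A} {w : B' ⥤ B}
    {x : B ⥤ C} {x' : B' ⥤ C'} {y : C' ⥤ C}
    (α : v ⋙ u ⟶ u' ⋙ w) (β : w ⋙ x ⟶ x' ⋙ y) :
    v ⋙ (u ⋙ x) ⟶ (u' ⋙ x') ⋙ y :=
  Functor.whiskerRight α x ≫ Functor.whiskerLeft u' β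

end Comps

section Fibers

variable {A B : Type u} [SmallCategory A] [SmallCategory B]

/-- The fiber `A_b` of `F : A ⥤ B` at `b : B`. -/
structure CatFiber (F : A ⥤ B) (b : B) : Type u where
  obj : A
  eq : F.obj obj = b

instance (F : A ⥤ B) (b : B) : Category (CatFiber F b) where
  Hom x y := { f : x.obj ⟶ y.obj // F.map f = eqToHom (x.eq.trans y.eq.symm) }
  id x := ⟨𝟙 x.obj, by simp⟩
  comp {x y z} f g := ⟨f.1 ≫ g.1, by rw [Functor.map_comp, f.2, g.2, eqToHom_trans]⟩
  id_comp f := by apply Subtype.ext; simp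
  comp_id f := by apply Subtype.ext; simp
  assoc f g h := by apply Subtype.ext; simp

/-- The canonical functor `A_b ⥤ A/b`. -/
def fiberToSlice (F : A ⥤ B) (b : B) : CatFiber F b ⥤ CostructuredArrow F b where
  obj x := CostructuredArrow.mk (Y := x.obj) (eqToHom x.eq)
  map {x y} f := CostructuredArrow.homMk f.1 (by simp [f.2])

/-- The canonical functor `A_b ⥤ b\A`. -/
def fiberToCoslice (F : A ⥤ B) (b : B) : CatFiber F b ⥤ StructuredArrow b F where
  obj x := StructuredArrow.mk (Y := x.obj) (eqToHom x.eq.symm)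
  map {x y} f := StructuredArrow.homMk f.1 (by simp [f.2])

/-- The functor `F` is `W`-proper. -/
def IsProper (W : FunctorClass.{u}) (F : A ⥤ B) : Prop :=
  ∀ b : B, IsCoasphericalFunctor W (fiberToSlice F b)

/-- The functor `F` is `W`-smooth. -/
def IsSmooth (W : FunctorClass.{u}) (F : A ⥤ B) : Prop :=
  ∀ b : B, IsAsphericalFunctor W (fiberToCoslice F b)

/-- The functor `F` is a precofibration: each canonical functor `A_b ⥤ A/b` admits a left
adjoint. -/
def IsPrecofibration (F : A ⥤ B) : Prop :=
  ∀ b : B, (fiberToSlice F b).IsRightAdjoint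

end Fibers

/-- `F` is an isomorphism of categories. -/
def IsCatIso {A B : Type u} [SmallCategory A] [SmallCategory B] (F : A ⥤ B) : Prop :=
  ∃ G : B ⥤ A, F ⋙ G = 𝟭 A ∧ G ⋙ F = 𝟭 B

section Pullback

variable {A B B' : Type u} [SmallCategory A] [SmallCategory B] [SmallCategory B']

/-- The strict pullback `B' ×_B A` of `u : A ⥤ B` and `w : B' ⥤ B`. -/
structure CatPullback (u : A ⥤ B) (w : B' ⥤ B) : Type u where
  fst : B'
  snd : A
  eq : w.obj fst = u.obj snd

instance (u : A ⥤ B) (w : B' ⥤ B) : Category (CatPullback u w) where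
  Hom x y := { p : (x.fst ⟶ y.fst) × (x.snd ⟶ y.snd) //
    w.map p.1 ≫ eqToHom y.eq = eqToHom x.eq ≫ u.map p.2 }
  id x := ⟨(𝟙 x.fst, 𝟙 x.snd), by simp⟩
  comp {x y z} f g := ⟨(f.1.1 ≫ g.1.1, f.1.2 ≫ g.1.2), by
    rw [Functor.map_comp, Functor.map_comp, Category.assoc, g.2, ← Category.assoc, f.2,
      Category.assoc]⟩
  id_comp f := by apply Subtype.ext; simp
  comp_id f := by apply Subtype.ext; simp
  assoc f g h := by apply Subtype.ext; simp

/-- First projection of the strict pullback. -/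
def pbFst (u : A ⥤ B) (w : B' ⥤ B) : CatPullback u w ⥤ B' where
  obj x := x.fst
  map f := f.1.1

/-- Second projection of the strict pullback. -/
def pbSnd (u : A ⥤ B) (w : B' ⥤ B) : CatPullback u w ⥤ A where
  obj x := x.snd
  map f := f.1.2

theorem pb_comm (u : A ⥤ B) (w : B' ⥤ B) : pbSnd u w ⋙ u = pbFst u w ⋙ w := by
  have hobj : ∀ x : CatPullback u w, (pbSnd u w ⋙ u).obj x = (pbFst u w ⋙ w).obj x :=
    fun x => x.eq.symm
  refine CategoryTheory.Functor.ext hobj (fun x y f => ?_)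
  have h := f.2
  dsimp only [Functor.comp_map, pbFst, pbSnd]
  rw [h]
  simp
  erw [eqToHom_trans_assoc, eqToHom_refl, Category.id_comp]

/-- The comparison functor from the top-left corner of a commutative square to the
strict pullback. -/
def toPullback {A' : Type u} [SmallCategory A'] (u : A ⥤ B) (u' : A' ⥤ B') (v : A' ⥤ A)
    (w : B' ⥤ B) (h : v ⋙ u = u' ⋙ w) : A' ⥤ CatPullback u w where
  obj a' := ⟨u'.obj a', v.obj a', (Functor.congr_obj h a').symm⟩
  map {x y} f := ⟨(u'.map f, v.map f), by
    have := Functor.congr_hom h f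
    dsimp at this
    rw [this]
    simp⟩
  map_id x := by
    apply Subtype.ext
    show (u'.map (𝟙 x), v.map (𝟙 x)) = (𝟙 _, 𝟙 _)
    simp
  map_comp f g := by
    apply Subtype.ext
    show (u'.map _, v.map _) = (u'.map _ ≫ u'.map _, v.map _ ≫ v.map _)
    simp

end Pullback

section BaseChange

variable {A A' B B' : Type u} [SmallCategory A] [SmallCategory A']
  [SmallCategory B] [SmallCategory B']

/-- The base-change morphism `v ∘ r' ⟶ r ∘ w` associated with a square whose vertical
edges admit right adjoints. -/
def baseChangeR {u : A ⥤ B} {u' : A' ⥤ B'} {v : A' ⥤ A} {w : B' ⥤ B}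
    {r : B ⥤ A} {r' : B' ⥤ A'} (adj : u ⊣ r) (adj' : u' ⊣ r')
    (α : v ⋙ u ⟶ u' ⋙ w) : r' ⋙ v ⟶ w ⋙ r :=
  Functor.whiskerLeft (r' ⋙ v) adj.unit ≫ Functor.whiskerLeft r' (Functor.whiskerRight α r) ≫
    Functor.whiskerRight adj'.counit (w ⋙ r)

/-- The base-change morphism `w'' ∘ u ⟶ u' ∘ v''` associated with a square whose horizontal
edges admit left adjoints. -/
def baseChangeL {u : A ⥤ B} {u' : A' ⥤ B'} {v : A' ⥤ A} {w : B' ⥤ B}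
    {v'' : A ⥤ A'} {w'' : B ⥤ B'} (adjv : v'' ⊣ v) (adjw : w'' ⊣ w)
    (α : v ⋙ u ⟶ u' ⋙ w) : u ⋙ w'' ⟶ v'' ⋙ u' :=
  Functor.whiskerRight adjv.unit (u ⋙ w'') ≫ Functor.whiskerLeft v'' (Functor.whiskerRight α w'') ≫
    Functor.whiskerLeft (v'' ⋙ u') adjw.counit

end BaseChange

section LocColoc

variable {X Y C : Type u} [SmallCategory X] [SmallCategory Y] [SmallCategory C]

/-- `F : X ⥤ Y`, viewed over `C` via `P : Y ⥤ C` (and `F ⋙ P` on `X`), is a `W`-equivalence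
locally on `C`. -/
def IsLocallyEquiv (W : FunctorClass.{u}) (F : X ⥤ Y) (P : Y ⥤ C) : Prop :=
  ∀ c : C, W (triangleSlice F P c)

/-- `F : X ⥤ Y`, viewed over `C` via `P : Y ⥤ C` (and `F ⋙ P` on `X`), is a `W`-equivalence
colocally on `C`. -/
def IsColocallyEquiv (W : FunctorClass.{u}) (F : X ⥤ Y) (P : Y ⥤ C) : Prop :=
  ∀ c : C, W (triangleCoslice F P c)

end LocColoc

/-- A square `(u, u', v, w, α)` is weakly `W`-exact. -/
def IsWeakExactSquare (W : FunctorClass.{u}) {A A' B B' : Type u} [SmallCategory A]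
    [SmallCategory A'] [SmallCategory B] [SmallCategory B'] (u : A ⥤ B) (u' : A' ⥤ B')
    (v : A' ⥤ A) (w : B' ⥤ B) (α : v ⋙ u ⟶ u' ⋙ w) : Prop :=
  ∀ b' : B', IsColocallyEquiv W (squareSlice u u' v w α b') (CostructuredArrow.proj u (w.obj b'))

/-- `w : B' ⥤ B` is a discrete fibration. -/
def IsDiscreteFibration {B' B : Type u} [SmallCategory B'] [SmallCategory B]
    (w : B' ⥤ B) : Prop :=
  ∀ (b' : B') (b : B) (g : b ⟶ w.obj b'),
    ∃! p : Σ b₀ : B', b₀ ⟶ b', ∃ h : w.obj p.1 = b, w.map p.2 = eqToHom h ≫ g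

/-- The coarse fundamental localizer: functors whose source and target are both empty or
both nonempty. -/
def coarseLocalizer : FunctorClass.{u} :=
  @fun A B _ _ _ => Nonempty A ↔ Nonempty B

/-- The map induced on sets of connected components. -/
def π₀map {A B : Type u} [SmallCategory A] [SmallCategory B] (F : A ⥤ B) :
    ConnectedComponents A → ConnectedComponents B :=
  F.mapConnectedComponents

/-- The fundamental localizer `W₀` of `0`-equivalences: functors inducing a bijection on
connected components. -/
def W₀ : FunctorClass.{u} :=
  @fun _ _ _ _ F => Function.Bijective (π₀map F)

/-- A square in `Cat`: four small categories, four functors and a `2`-cell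
`α : u ∘ v ⟶ w ∘ u'`. -/
structure CatSquare : Type (u + 1) where
  {A' : Type u}
  {A : Type u}
  {B' : Type u}
  {B : Type u}
  [instA' : SmallCategory A']
  [instA : SmallCategory A]
  [instB' : SmallCategory B']
  [instB : SmallCategory B]
  u : A ⥤ B
  u' : A' ⥤ B'
  v : A' ⥤ A
  w : B' ⥤ B
  α : v ⋙ u ⟶ u' ⋙ w

attribute [instance] CatSquare.instA' CatSquare.instA CatSquare.instB' CatSquare.instB

/-- A bundled square is `W`-exact. -/
def CatSquare.IsExact (W : FunctorClass.{u}) (S : CatSquare.{u}) : Prop :=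
  IsExactSquare W S.u S.u' S.v S.w S.α

/-- The opposite of a square. -/
def CatSquare.op (S : CatSquare.{u}) : CatSquare.{u} :=
  ⟨S.w.op, S.v.op, S.u'.op, S.u.op, squareOpCell S.u S.u' S.v S.w S.α⟩

/-- The comma square associated with `u : A ⥤ B` and `w : B' ⥤ B`. -/
def commaSquare {A B B' : Type u} [SmallCategory A] [SmallCategory B] [SmallCategory B']
    (u : A ⥤ B) (w : B' ⥤ B) : CatSquare.{u} :=
  ⟨u, Comma.snd u w, Comma.fst u w, w, Comma.natTrans u w⟩

/-- The comma square `D^g_{u, b}` of `u : A ⥤ B` at an object `b : B`. -/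
def commaObjSquare {A B : Type u} [SmallCategory A] [SmallCategory B] (u : A ⥤ B) (b : B) :
    CatSquare.{u} :=
  commaSquare u (Functor.fromPUnit.{u} b)

/-- The dual comma square `D^d_{v, a}` of `v : A' ⥤ A` at an object `a : A`. -/
def commaObjSquareD {A' A : Type u} [SmallCategory A'] [SmallCategory A] (v : A' ⥤ A)
    (a : A) : CatSquare.{u} :=
  commaSquare (Functor.fromPUnit.{u} a) v

/-- The square with top edge `F : A ⥤ B`, the canonical functors `A ⥤ e`, `B ⥤ e` as
vertical edges, identity bottom edge and identity `2`-cell. -/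
def starSquare {A B : Type u} [SmallCategory A] [SmallCategory B] (F : A ⥤ B) :
    CatSquare.{u} :=
  ⟨Functor.star B, Functor.star A, F, 𝟭 (PtCat.{u}), 𝟙 (F ⋙ Functor.star B)⟩

/-- The square with all four corners of the form `(A, e, e, e)`, canonical edges and
identity `2`-cell. -/
def ptSquare (A : Type u) [SmallCategory A] : CatSquare.{u} :=
  ⟨𝟭 (PtCat.{u}), Functor.star A, Functor.star A, 𝟭 (PtCat.{u}), 𝟙 (Functor.star A)⟩

/-- `Q` is stable under horizontal composition of squares (condition CS1h). -/
def StableHComp (Q : CatSquare.{u} → Prop) : Prop :=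
  ∀ {A A' A'' B B' B'' : Type u}
    [SmallCategory A] [SmallCategory A'] [SmallCategory A'']
    [SmallCategory B] [SmallCategory B'] [SmallCategory B'']
    (u : A ⥤ B) (u' : A' ⥤ B') (u'' : A'' ⥤ B'')
    (v : A' ⥤ A) (w : B' ⥤ B) (v' : A'' ⥤ A') (w' : B'' ⥤ B')
    (α : v ⋙ u ⟶ u' ⋙ w) (α' : v' ⋙ u' ⟶ u'' ⋙ w'),
    Q ⟨u, u', v, w, α⟩ → Q ⟨u', u'', v', w', α'⟩ →
    Q ⟨u, u'', v' ⋙ v, w' ⋙ w, hcomp2cell α α'⟩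

/-- `Q` is stable under vertical composition of squares (condition CS1v). -/
def StableVComp (Q : CatSquare.{u} → Prop) : Prop :=
  ∀ {A A' B B' C C' : Type u}
    [SmallCategory A] [SmallCategory A'] [SmallCategory B] [SmallCategory B']
    [SmallCategory C] [SmallCategory C']
    (u : A ⥤ B) (u' : A' ⥤ B') (v : A' ⥤ A) (w : B' ⥤ B)
    (x : B ⥤ C) (x' : B' ⥤ C') (y : C' ⥤ C)
    (α : v ⋙ u ⟶ u' ⋙ w) (β : w ⋙ x ⟶ x' ⋙ y),
    Q ⟨u, u', v, w, α⟩ → Q ⟨x, x', w, y, β⟩ →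
    Q ⟨u ⋙ x, u' ⋙ x', v, y, vcomp2cell α β⟩

/-- `Q` satisfies horizontal descent (condition CS2h). -/
def HorizontalDescent (Q : CatSquare.{u} → Prop) : Prop :=
  ∀ {A A' B B' : Type u}
    [SmallCategory A] [SmallCategory A'] [SmallCategory B] [SmallCategory B']
    (u : A ⥤ B) (u' : A' ⥤ B') (v : A' ⥤ A) (w : B' ⥤ B) (α : v ⋙ u ⟶ u' ⋙ w)
    (J : Type u) (Aj Bj : J → Type u)
    [∀ j, SmallCategory (Aj j)] [∀ j, SmallCategory (Bj j)]
    (uj : ∀ j, Aj j ⥤ Bj j) (vj : ∀ j, Aj j ⥤ A') (wj : ∀ j, Bj j ⥤ B')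
    (αj : ∀ j, vj j ⋙ u' ⟶ uj j ⋙ wj j),
    (∀ b' : B', ∃ j, ∃ b : Bj j, (wj j).obj b = b') →
    (∀ j, Q ⟨u', uj j, vj j, wj j, αj j⟩) →
    (∀ j, Q ⟨u, uj j, vj j ⋙ v, wj j ⋙ w, hcomp2cell α (αj j)⟩) →
    Q ⟨u, u', v, w, α⟩

/-- `Q` satisfies local descent (condition CS3h). -/
def LocalDescent (Q : CatSquare.{u} → Prop) : Prop :=
  ∀ {A A' B B' : Type u}
    [SmallCategory A] [SmallCategory A'] [SmallCategory B] [SmallCategory B']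
    (u : A ⥤ B) (u' : A' ⥤ B') (v : A' ⥤ A) (w : B' ⥤ B) (α : v ⋙ u ⟶ u' ⋙ w),
    (∀ b' : B', Q ⟨u, Comma.snd u' (Functor.fromPUnit.{u} b'),
        Comma.fst u' (Functor.fromPUnit.{u} b') ⋙ v, Functor.fromPUnit.{u} b' ⋙ w,
        hcomp2cell α (Comma.natTrans u' (Functor.fromPUnit.{u} b'))⟩) →
    Q ⟨u, u', v, w, α⟩

/-- `Q` satisfies colocal descent (condition CS3v). -/
def ColocalDescent (Q : CatSquare.{u} → Prop) : Prop :=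
  ∀ {A A' B B' : Type u}
    [SmallCategory A] [SmallCategory A'] [SmallCategory B] [SmallCategory B']
    (u : A ⥤ B) (u' : A' ⥤ B') (v : A' ⥤ A) (w : B' ⥤ B) (α : v ⋙ u ⟶ u' ⋙ w),
    (∀ a : A, Q ⟨Functor.fromPUnit.{u} a ⋙ u,
        Comma.snd (Functor.fromPUnit.{u} a) v ⋙ u',
        Comma.fst (Functor.fromPUnit.{u} a) v, w,
        vcomp2cell (Comma.natTrans (Functor.fromPUnit.{u} a) v) α⟩) →
    Q ⟨u, u', v, w, α⟩

/-- `Q` is stable under passing to opposite squares (condition CS4). -/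
def OpStable (Q : CatSquare.{u} → Prop) : Prop :=
  ∀ S : CatSquare.{u}, Q S → Q S.op

/-- Isomorphism of squares. -/
def CatSquare.Isomorphic (S T : CatSquare.{u}) : Prop :=
  ∃ (eA' : S.A' ⥤ T.A') (eA : S.A ⥤ T.A) (eB' : S.B' ⥤ T.B') (eB : S.B ⥤ T.B)
    (_ : IsCatIso eA') (_ : IsCatIso eA) (_ : IsCatIso eB') (_ : IsCatIso eB)
    (hv : S.v ⋙ eA = eA' ⋙ T.v) (hu : S.u ⋙ eB = eA ⋙ T.u)
    (hu' : S.u' ⋙ eB' = eA' ⋙ T.u') (hw : S.w ⋙ eB = eB' ⋙ T.w),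
    Functor.whiskerRight S.α eB =
      eqToHom (by rw [Functor.assoc, hu, ← Functor.assoc, hv, Functor.assoc]) ≫
        Functor.whiskerLeft eA' T.α ≫
        eqToHom (by rw [← Functor.assoc, ← hu', Functor.assoc, ← hw, ← Functor.assoc])

/-- A bundled square is a right Beck–Chevalley square. -/
def CatSquare.IsRightBC (S : CatSquare.{u}) : Prop :=
  ∃ (v'' : S.A ⥤ S.A') (w'' : S.B ⥤ S.B') (adjv : v'' ⊣ S.v) (adjw : w'' ⊣ S.w),
    IsIso (baseChangeL adjv adjw S.α)

/-- The functor `A/b ⥤ B/b` induced by `u : A ⥤ B`, in terms of comma categories. -/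
def commaSliceInduced {A B : Type u} [SmallCategory A] [SmallCategory B] (u : A ⥤ B)
    (b : B) : Comma u (Functor.fromPUnit.{u} b) ⥤ Comma (𝟭 B) (Functor.fromPUnit.{u} b) where
  obj x := { left := u.obj x.left, right := x.right, hom := x.hom }
  map {x y} f := { left := u.map f.left, right := f.right, w := by simp [f.w] }

/-- The cartesian square expressing `A/b` as the pullback of `u : A ⥤ B` along the
forgetful functor `B/b ⥤ B`. -/
def sliceCartSquare {A B : Type u} [SmallCategory A] [SmallCategory B] (u : A ⥤ B)
    (b : B) : CatSquare.{u} :=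
  ⟨u, commaSliceInduced u b, Comma.fst u (Functor.fromPUnit.{u} b),
    Comma.fst (𝟭 B) (Functor.fromPUnit.{u} b),
    𝟙 (Comma.fst u (Functor.fromPUnit.{u} b) ⋙ u)⟩

section Aux

lemma aspherical_iff_of_iso {X Y : Type u} [SmallCategory X] [SmallCategory Y]
    (W : FunctorClass.{u}) (hW : IsWeakFundamentalLocalizer W)
    (F : X ⥤ Y) (G : Y ⥤ X) (h1 : F ⋙ G = 𝟭 X) (h2 : G ⋙ F = 𝟭 Y) :
    IsAsphericalCat W X ↔ IsAsphericalCat W Y := by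
  have hFG : W (F ⋙ G) := by rw [h1]; exact hW.id_mem X
  have hF : W F := hW.retract_mem G F h2 hFG
  have hstar : Functor.star X = F ⋙ Functor.star Y := by
    apply CategoryTheory.Functor.ext (fun _ => rfl)
  constructor
  · intro h
    rw [IsAsphericalCat, hstar] at h
    exact hW.of_comp_left F (Functor.star Y) hF h
  · intro h
    rw [IsAsphericalCat, hstar]
    exact hW.comp_mem F (Functor.star Y) hF h

variable {A A' B B' : Type u} [SmallCategory A] [SmallCategory A']
  [SmallCategory B] [SmallCategory B']
  (u : A ⥤ B) (u' : A' ⥤ B') (v : A' ⥤ A) (w : B' ⥤ B) (α : v ⋙ u ⟶ u' ⋙ w)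
  (a : A) (b' : B') (g : u.obj a ⟶ w.obj b')

/-- From the fiber to the structured arrow category over the slice-induced functor. -/
def fiberToStr : SquareFiber u u' v w α a b' g ⥤
    StructuredArrow (CostructuredArrow.mk g) (squareSlice u u' v w α b') where
  obj s := StructuredArrow.mk (Y := CostructuredArrow.mk s.g')
    (CostructuredArrow.homMk s.f (by
      have := s.fac
      simp only [squareSlice, CostructuredArrow.mk_hom_eq_self] at *
      simpa using this))
  map {s₁ s₂} t := StructuredArrow.homMk
    (CostructuredArrow.homMk t.1 (by simpa using t.2.2))
    (by
      apply CostructuredArrow.hom_ext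
      exact t.2.1)
  map_id s := by apply StructuredArrow.hom_ext; apply CostructuredArrow.hom_ext; rfl
  map_comp t₁ t₂ := by apply StructuredArrow.hom_ext; apply CostructuredArrow.hom_ext; rfl

/-- From the structured arrow category over the slice-induced functor to the fiber. -/
def strToFiber : StructuredArrow (CostructuredArrow.mk g) (squareSlice u u' v w α b') ⥤
    SquareFiber u u' v w α a b' g where
  obj z := ⟨z.right.left, z.hom.left, z.right.hom, by
    have := CostructuredArrow.w z.hom
    simpa [squareSlice] using this⟩
  map {z₁ z₂} k := ⟨k.right.left,
    by
      have h := congrArg CommaMorphism.left (StructuredArrow.w k)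
      simpa [squareSlice] using h,
    CostructuredArrow.w k.right⟩
  map_id z := by apply Subtype.ext; rfl
  map_comp k₁ k₂ := by apply Subtype.ext; rfl

/-- From the fiber to the costructured arrow category over the coslice-induced functor. -/
def fiberToCostr : SquareFiber u u' v w α a b' g ⥤
    CostructuredArrow (squareCoslice u u' v w α a) (StructuredArrow.mk g) where
  obj s := CostructuredArrow.mk (Y := StructuredArrow.mk (Y := s.pt) s.f)
    (StructuredArrow.homMk s.g' (by
      have := s.fac
      simp only [squareCoslice, StructuredArrow.mk_hom_eq_self] at *
      simpa using this))
  map {s₁ s₂} t := CostructuredArrow.homMk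
    (StructuredArrow.homMk t.1 (by simpa using t.2.1))
    (by
      apply StructuredArrow.hom_ext
      exact t.2.2)
  map_id s := by apply CostructuredArrow.hom_ext; apply StructuredArrow.hom_ext; rfl
  map_comp t₁ t₂ := by apply CostructuredArrow.hom_ext; apply StructuredArrow.hom_ext; rfl

/-- From the costructured arrow category over the coslice-induced functor to the fiber. -/
def costrToFiber : CostructuredArrow (squareCoslice u u' v w α a) (StructuredArrow.mk g) ⥤
    SquareFiber u u' v w α a b' g where
  obj z := ⟨z.left.right, z.left.hom, z.hom.right, by
    have := StructuredArrow.w z.hom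
    simpa [squareCoslice] using this⟩
  map {z₁ z₂} k := ⟨k.left.right,
    StructuredArrow.w k.left,
    by
      have h := congrArg CommaMorphism.right (CostructuredArrow.w k)
      simpa [squareCoslice] using h⟩
  map_id z := by apply Subtype.ext; rfl
  map_comp k₁ k₂ := by apply Subtype.ext; rfl

lemma fiberToStr_strToFiber :
    fiberToStr u u' v w α a b' g ⋙ strToFiber u u' v w α a b' g =
      𝟭 (SquareFiber u u' v w α a b' g) := rfl

lemma strToFiber_fiberToStr :
    strToFiber u u' v w α a b' g ⋙ fiberToStr u u' v w α a b' g =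
      𝟭 (StructuredArrow (CostructuredArrow.mk g) (squareSlice u u' v w α b')) := rfl

lemma fiberToCostr_costrToFiber :
    fiberToCostr u u' v w α a b' g ⋙ costrToFiber u u' v w α a b' g =
      𝟭 (SquareFiber u u' v w α a b' g) := rfl

lemma costrToFiber_fiberToCostr :
    costrToFiber u u' v w α a b' g ⋙ fiberToCostr u u' v w α a b' g =
      𝟭 (CostructuredArrow (squareCoslice u u' v w α a) (StructuredArrow.mk g)) := rfl

end Aux

theorem statement0 (W : FunctorClass.{u}) (hW : IsWeakFundamentalLocalizer W)
    {A A' B B' : Type u} [SmallCategory A] [SmallCategory A'] [SmallCategory B]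
    [SmallCategory B'] (u : A ⥤ B) (u' : A' ⥤ B') (v : A' ⥤ A) (w : B' ⥤ B)
    (α : v ⋙ u ⟶ u' ⋙ w) :
    ((∀ b' : B', IsCoasphericalFunctor W (squareSlice u u' v w α b')) ↔
        (∀ a : A, IsAsphericalFunctor W (squareCoslice u u' v w α a)))
      ∧ ((∀ b' : B', IsCoasphericalFunctor W (squareSlice u u' v w α b')) ↔
        (∀ (a : A) (b' : B') (g : u.obj a ⟶ w.obj b'),
          IsAsphericalCat W (SquareFiber u u' v w α a b' g))) := by
  have hac : (∀ b' : B', IsCoasphericalFunctor W (squareSlice u u' v w α b')) ↔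
      (∀ (a : A) (b' : B') (g : u.obj a ⟶ w.obj b'),
        IsAsphericalCat W (SquareFiber u u' v w α a b' g)) := by
    constructor
    · intro h a b' g
      exact (aspherical_iff_of_iso W hW (fiberToStr u u' v w α a b' g)
        (strToFiber u u' v w α a b' g) (fiberToStr_strToFiber u u' v w α a b' g)
        (strToFiber_fiberToStr u u' v w α a b' g)).mpr (h b' (CostructuredArrow.mk g))
    · intro h b' x
      rw [CostructuredArrow.eq_mk x]
      exact (aspherical_iff_of_iso W hW (fiberToStr u u' v w α x.left b' x.hom)
        (strToFiber u u' v w α x.left b' x.hom)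
        (fiberToStr_strToFiber u u' v w α x.left b' x.hom)
        (strToFiber_fiberToStr u u' v w α x.left b' x.hom)).mp (h x.left b' x.hom)
  have hbc : (∀ a : A, IsAsphericalFunctor W (squareCoslice u u' v w α a)) ↔
      (∀ (a : A) (b' : B') (g : u.obj a ⟶ w.obj b'),
        IsAsphericalCat W (SquareFiber u u' v w α a b' g)) := by
    constructor
    · intro h a b' g
      exact (aspherical_iff_of_iso W hW (fiberToCostr u u' v w α a b' g)
        (costrToFiber u u' v w α a b' g) (fiberToCostr_costrToFiber u u' v w α a b' g)
        (costrToFiber_fiberToCostr u u' v w α a b' g)).mpr (h a (StructuredArrow.mk g))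
    · intro h a y
      rw [StructuredArrow.eq_mk y]
      exact (aspherical_iff_of_iso W hW (fiberToCostr u u' v w α a y.right y.hom)
        (costrToFiber u u' v w α a y.right y.hom)
        (fiberToCostr_costrToFiber u u' v w α a y.right y.hom)
        (costrToFiber_fiberToCostr u u' v w α a y.right y.hom)).mp (h a y.right y.hom)
  exact ⟨hac.trans hbc.symm, hac⟩

end Paper
end

section
/- Let D be a square in Cat, given by u : A → B, u' : A' → B', v : A' → A, w : B' → B and α : u ∘ v ⟶ w ∘ u', such that u and u' admit right adjoints. The following conditions are equivalent: (a) D is a left Beck–Chevalley square, i.e., the base-change morphism c : v ∘ r' ⟶ r ∘ w (where r, r' are right adjoints of u, u') is an isomorphism; (c) D is Guitart exact, i.e., for every object a of A, every object b' of B' and every morphism g : u(a) → w(b'), the category A'_{(a,b',g)} is connected (nonempty with any two objects joined by a zigzag of morphisms); (d) for every object a of A, the induced functor a\A' → u(a)\B' admits a right adjoint; (e) for every a, b', g as in (c), the category A'_{(a,b',g)} has a terminal object. -/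
open CategoryTheory

universe u

namespace Paper

section BCAux

open Limits

/-- A category with a terminal object is connected. -/
theorem isConnected_of_hasTerminal' (J : Type u) [SmallCategory J] [HasTerminal J] :
    IsConnected J := by
  have : Nonempty J := ⟨⊤_ J⟩
  refine zigzag_isConnected (fun j₁ j₂ => ?_)
  exact Relation.ReflTransGen.tail
    (Relation.ReflTransGen.single (Or.inl ⟨terminal.from j₁⟩))
    (Or.inr ⟨terminal.from j₂⟩)

/-- Transfer of `HasTerminal` along an equivalence. -/
theorem hasTerminal_of_equiv {C D : Type u} [SmallCategory C] [SmallCategory D]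
    (e : C ≌ D) [HasTerminal C] : HasTerminal D :=
  (terminalIsTerminal.isTerminalObj e.functor (⊤_ C)).hasTerminal

variable {A A' B B' : Type u} [SmallCategory A] [SmallCategory A']
  [SmallCategory B] [SmallCategory B'] {u : A ⥤ B} {u' : A' ⥤ B'} {v : A' ⥤ A}
  {w : B' ⥤ B} (α : v ⋙ u ⟶ u' ⋙ w) {r : B ⥤ A} {r' : B' ⥤ A'}
  (adj : u ⊣ r) (adj' : u' ⊣ r')

/-- The key comparison map. -/
def bcPhi (a : A) (b' : B') (f : a ⟶ v.obj (r'.obj b')) : u.obj a ⟶ w.obj b' :=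
  u.map f ≫ α.app (r'.obj b') ≫ w.map (adj'.counit.app b')

theorem homEquiv_bcPhi (a : A) (b' : B') (f : a ⟶ v.obj (r'.obj b')) :
    adj.homEquiv a (w.obj b') (bcPhi α adj' a b' f) =
      f ≫ (baseChangeR adj adj' α).app b' := by
  simp only [bcPhi, baseChangeR, Adjunction.homEquiv_unit, Functor.map_comp,
    NatTrans.comp_app, Functor.whiskerLeft_app, Functor.whiskerRight_app, Functor.comp_obj,
    Functor.comp_map]
  have hnat := adj.unit.naturality f
  dsimp at hnat
  rw [← Category.assoc, ← hnat]
  simp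

theorem isIso_baseChangeR_iff_bij :
    IsIso (baseChangeR adj adj' α) ↔
      ∀ (a : A) (b' : B'), Function.Bijective (bcPhi α adj' a b') := by
  rw [NatTrans.isIso_iff_isIso_app]
  have key : ∀ (b' : B') (a : A),
      Function.Bijective
        (fun f : a ⟶ (r' ⋙ v).obj b' => f ≫ (baseChangeR adj adj' α).app b') ↔
      Function.Bijective (bcPhi α adj' a b') := by
    intro b' a
    have hcomp : (fun f : a ⟶ (r' ⋙ v).obj b' => f ≫ (baseChangeR adj adj' α).app b') =
        (adj.homEquiv a (w.obj b')) ∘ (bcPhi α adj' a b') := by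
      funext f
      exact (homEquiv_bcPhi α adj adj' a b' f).symm
    rw [hcomp]
    exact (adj.homEquiv a (w.obj b')).bijective.of_comp_iff' _
  constructor
  · intro h a b'
    rw [← key b' a]
    exact ((isIso_iff_yoneda_map_bijective ((baseChangeR adj adj' α).app b')).1 (h b')) a
  · intro h b'
    exact isIso_of_yoneda_map_bijective _ (fun a => (key b' a).2 (h a b'))

theorem bcPhi_transpose {a : A} {b' : B'} {g : u.obj a ⟶ w.obj b'}
    (X : SquareFiber u u' v w α a b' g) :
    bcPhi α adj' a b' (X.f ≫ v.map (adj'.unit.app X.pt ≫ r'.map X.g')) = g := by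
  have hnat := α.naturality (adj'.unit.app X.pt ≫ r'.map X.g')
  dsimp at hnat
  rw [bcPhi, Functor.map_comp, Category.assoc, ← Category.assoc (u.map (v.map _)),
    hnat]
  have hback : u'.map (adj'.unit.app X.pt ≫ r'.map X.g') ≫ adj'.counit.app b' = X.g' := by
    simp
  rw [Category.assoc, ← Functor.map_comp, hback, ← Category.assoc, Category.assoc (u.map X.f)]
  exact X.fac

theorem bcPsi_const {a : A} {b' : B'} {g : u.obj a ⟶ w.obj b'}
    {X Y : SquareFiber u u' v w α a b' g} (h : X ⟶ Y) :
    X.f ≫ v.map (adj'.unit.app X.pt ≫ r'.map X.g') =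
      Y.f ≫ v.map (adj'.unit.app Y.pt ≫ r'.map Y.g') := by
  obtain ⟨hm, hc1, hc2⟩ := h
  have h1 : adj'.unit.app X.pt ≫ r'.map X.g' =
      hm ≫ adj'.unit.app Y.pt ≫ r'.map Y.g' := by
    have hnat := adj'.unit.naturality hm
    dsimp at hnat
    rw [← hc2, Functor.map_comp, ← Category.assoc, ← hnat]
    simp
  rw [h1, Functor.map_comp, ← Category.assoc, hc1]

theorem hasTerminal_fiber_of_bij
    (hbij : ∀ (a : A) (b' : B'), Function.Bijective (bcPhi α adj' a b'))
    (a : A) (b' : B') (g : u.obj a ⟶ w.obj b') :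
    HasTerminal (SquareFiber u u' v w α a b' g) := by
  set f0 : a ⟶ v.obj (r'.obj b') := Function.surjInv (hbij a b').2 g with hf0def
  have hf0 : bcPhi α adj' a b' f0 = g := Function.surjInv_eq (hbij a b').2 g
  refine IsTerminal.hasTerminal
    (X := (⟨r'.obj b', f0, adj'.counit.app b', hf0⟩ : SquareFiber u u' v w α a b' g)) ?_
  refine IsTerminal.ofUniqueHom (fun X => ⟨adj'.unit.app X.pt ≫ r'.map X.g', ?_, ?_⟩) ?_
  · apply (hbij a b').1
    rw [bcPhi_transpose, hf0]
  · simp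
  · intro X m
    obtain ⟨mv, hm1, hm2⟩ := m
    apply Subtype.ext
    show mv = adj'.unit.app X.pt ≫ r'.map X.g'
    have hnat := adj'.unit.naturality mv
    dsimp at hnat
    rw [← hm2, Functor.map_comp, ← Category.assoc, ← hnat]
    simp

theorem bij_of_isConnected_fiber
    (hconn : ∀ (a : A) (b' : B') (g : u.obj a ⟶ w.obj b'),
      IsConnected (SquareFiber u u' v w α a b' g)) (a : A) (b' : B') :
    Function.Bijective (bcPhi α adj' a b') := by
  constructor
  · intro f1 f2 hf
    haveI := hconn a b' (bcPhi α adj' a b' f1)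
    set X1 : SquareFiber u u' v w α a b' (bcPhi α adj' a b' f1) :=
      ⟨r'.obj b', f1, adj'.counit.app b', rfl⟩
    set X2 : SquareFiber u u' v w α a b' (bcPhi α adj' a b' f1) :=
      ⟨r'.obj b', f2, adj'.counit.app b', hf.symm⟩
    have := constant_of_preserves_morphisms
      (F := fun X : SquareFiber u u' v w α a b' (bcPhi α adj' a b' f1) =>
        X.f ≫ v.map (adj'.unit.app X.pt ≫ r'.map X.g'))
      (fun _ _ h => bcPsi_const α adj' h) X1 X2
    simpa [X1, X2] using this
  · intro g
    haveI := hconn a b' g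
    obtain ⟨X⟩ : Nonempty (SquareFiber u u' v w α a b' g) := inferInstance
    exact ⟨X.f ≫ v.map (adj'.unit.app X.pt ≫ r'.map X.g'), bcPhi_transpose α adj' X⟩

/-- Functor from the comma category of `squareCoslice` at `Y` to the square fiber. -/
def fiberEquivFunctor (a : A) (Y : StructuredArrow (u.obj a) w) :
    CostructuredArrow (squareCoslice u u' v w α a) Y ⥤
      SquareFiber u u' v w α a Y.right Y.hom where
  obj P := ⟨P.left.right, P.left.hom, P.hom.right, by
    have hw := StructuredArrow.w P.hom
    dsimp [squareCoslice] at hw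
    rw [← hw]
    simp [squareCoslice]⟩
  map {P Q} m := ⟨m.left.right, by
      simpa using StructuredArrow.w m.left, by
      have hw := congrArg CommaMorphism.right (CostructuredArrow.w m)
      dsimp [squareCoslice] at hw
      simpa [squareCoslice] using hw⟩
  map_id P := rfl
  map_comp f g := rfl

/-- Functor from the square fiber to the comma category of `squareCoslice` at `Y`. -/
def fiberEquivInverse (a : A) (Y : StructuredArrow (u.obj a) w) :
    SquareFiber u u' v w α a Y.right Y.hom ⥤
      CostructuredArrow (squareCoslice u u' v w α a) Y where
  obj Z := CostructuredArrow.mk (Y := StructuredArrow.mk Z.f)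
    (StructuredArrow.homMk Z.g' (by simpa [squareCoslice] using Z.fac))
  map {Z₁ Z₂} h := CostructuredArrow.homMk
    (StructuredArrow.homMk h.1 h.2.1)
    (by
      apply StructuredArrow.hom_ext
      exact h.2.2)
  map_id Z := by
    apply CostructuredArrow.hom_ext
    apply StructuredArrow.hom_ext
    rfl
  map_comp f g := by
    apply CostructuredArrow.hom_ext
    apply StructuredArrow.hom_ext
    rfl

/-- The comma category of `squareCoslice` at `Y` is equivalent to the square fiber. -/
def fiberEquiv (a : A) (Y : StructuredArrow (u.obj a) w) :
    CostructuredArrow (squareCoslice u u' v w α a) Y ≌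
      SquareFiber u u' v w α a Y.right Y.hom :=
  CategoryTheory.Equivalence.mk (fiberEquivFunctor α a Y) (fiberEquivInverse α a Y)
    (NatIso.ofComponents (fun P => Iso.refl _) (fun {P Q} m => by
      apply CostructuredArrow.hom_ext
      apply StructuredArrow.hom_ext
      dsimp [fiberEquivFunctor, fiberEquivInverse]
      simp))
    (NatIso.ofComponents (fun Z => Iso.refl _) (fun {Z₁ Z₂} h => by
      apply Subtype.ext
      dsimp [fiberEquivFunctor, fiberEquivInverse]
      simp))

end BCAux

theorem statement8 {A A' B B' : Type u} [SmallCategory A] [SmallCategory A']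
    [SmallCategory B] [SmallCategory B'] (u : A ⥤ B) (u' : A' ⥤ B') (v : A' ⥤ A)
    (w : B' ⥤ B) (α : v ⋙ u ⟶ u' ⋙ w)
    (r : B ⥤ A) (r' : B' ⥤ A') (adj : u ⊣ r) (adj' : u' ⊣ r') :
    (IsIso (baseChangeR adj adj' α) ↔
        ∀ (a : A) (b' : B') (g : u.obj a ⟶ w.obj b'),
          IsConnected (SquareFiber u u' v w α a b' g))
      ∧ (IsIso (baseChangeR adj adj' α) ↔
        ∀ a : A, (squareCoslice u u' v w α a).IsLeftAdjoint)
      ∧ (IsIso (baseChangeR adj adj' α) ↔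
        ∀ (a : A) (b' : B') (g : u.obj a ⟶ w.obj b'),
          Limits.HasTerminal (SquareFiber u u' v w α a b' g)) := by
  have hbij := isIso_baseChangeR_iff_bij α adj adj'
  have htermP : (∀ (a : A) (b' : B') (g : u.obj a ⟶ w.obj b'),
      Limits.HasTerminal (SquareFiber u u' v w α a b' g)) ↔
      ∀ (a : A) (b' : B'), Function.Bijective (bcPhi α adj' a b') := by
    constructor
    · intro ht
      refine bij_of_isConnected_fiber α adj' (fun a b' g => ?_)
      haveI := ht a b' g
      exact isConnected_of_hasTerminal' _
    · intro hb a b' g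
      exact hasTerminal_fiber_of_bij α adj' hb a b' g
  have hconnP : (∀ (a : A) (b' : B') (g : u.obj a ⟶ w.obj b'),
      IsConnected (SquareFiber u u' v w α a b' g)) ↔
      ∀ (a : A) (b' : B'), Function.Bijective (bcPhi α adj' a b') := by
    constructor
    · exact bij_of_isConnected_fiber α adj'
    · intro hb a b' g
      haveI := hasTerminal_fiber_of_bij α adj' hb a b' g
      exact isConnected_of_hasTerminal' _
  have hadjT : (∀ a : A, (squareCoslice u u' v w α a).IsLeftAdjoint) ↔
      (∀ (a : A) (b' : B') (g : u.obj a ⟶ w.obj b'),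
        Limits.HasTerminal (SquareFiber u u' v w α a b' g)) := by
    constructor
    · intro hadj a b' g
      haveI := (isLeftAdjoint_iff_hasTerminal_costructuredArrow.1 (hadj a))
        (StructuredArrow.mk g)
      exact hasTerminal_of_equiv (fiberEquiv α a (StructuredArrow.mk g))
    · intro ht a
      rw [isLeftAdjoint_iff_hasTerminal_costructuredArrow]
      intro Y
      haveI : Limits.HasTerminal (SquareFiber u u' v w α a Y.right Y.hom) :=
        ht a Y.right Y.hom
      exact hasTerminal_of_equiv (fiberEquiv α a Y).symm
  exact ⟨hbij.trans hconnP.symm, hbij.trans (htermP.symm.trans hadjT.symm),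
    hbij.trans htermP.symm⟩

end Paper
end

section
/- Let W be a weak fundamental localizer and Q a class of squares in Cat satisfying CS1h (stability under horizontal composition), CS2h (horizontal descent), CI2g (all comma squares D^g_{u,b} of a functor at an object are in Q), and CI1d (for every W-coaspherical functor u : A → B, the square with top u, left A → e, right B → e, bottom id_e, identity 2-cell, is in Q). Then Q contains every cartesian square (commutative square with A' ≅ B' ×_B A) whose right edge u : A → B is W-proper. Respectively, if CI1d is replaced by CI1'd (the same squares but for u admitting a left adjoint), then Q contains every cartesian square whose right edge u is a precofibration. -/
open CategoryTheory

universe u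

namespace Paper

section Helpers

lemma eqToHom_sandwich {C : Type*} [Category C] {X Y : C} (p : X = X) (q : Y = Y)
    (f : X ⟶ Y) : f = eqToHom p ≫ f ≫ eqToHom q := by simp

lemma eqToHom_left' {C : Type*} [Category C] {X Y : C} (p : X = X) (f : X ⟶ Y) :
    f = eqToHom p ≫ f := by simp

lemma eqToHom_right' {C : Type*} [Category C] {X Y : C} (p : Y = Y) (f : X ⟶ Y) :
    f = f ≫ eqToHom p := by simp

lemma commaSandwich.{a₁, a₂, a₃, b₁, b₂, b₃} {X : Type a₁} {Y : Type a₂} {Z : Type a₃}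
    [Category.{b₁} X] [Category.{b₂} Y] [Category.{b₃} Z]
    {L : X ⥤ Z} {R : Y ⥤ Z} (a b : Comma L R) (p : a = a) (q : b = b)
    (f : a.left ⟶ b.left) : f = (eqToHom p).left ≫ f ≫ (eqToHom q).left := by simp

lemma toPt_eq {X : Type u} [SmallCategory X] (F G : X ⥤ PtCat.{u}) : F = G :=
  Functor.punit_ext' F G

lemma W_of_catIso {W : FunctorClass.{u}} (hW : IsWeakFundamentalLocalizer W)
    {X Y : Type u} [SmallCategory X] [SmallCategory Y]
    {F : X ⥤ Y} (h : IsCatIso F) : W F := by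
  obtain ⟨G, h1, h2⟩ := h
  exact hW.retract_mem G F h2 (by rw [h1]; exact hW.id_mem X)

lemma aspherical_transfer {W : FunctorClass.{u}} (hW : IsWeakFundamentalLocalizer W)
    {X Y : Type u} [SmallCategory X] [SmallCategory Y] (F : X ⥤ Y) (G : Y ⥤ X)
    (h1 : F ⋙ G = 𝟭 X) (h2 : G ⋙ F = 𝟭 Y) (hX : IsAsphericalCat W X) :
    IsAsphericalCat W Y := by
  have hG : W G := W_of_catIso hW ⟨F, h2, h1⟩
  have h3 : W (G ⋙ Functor.star X) := hW.comp_mem _ _ hG hX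
  rw [show G ⋙ Functor.star X = Functor.star Y from toPt_eq _ _] at h3
  exact h3

/-- A natural transformation all of whose components are `eqToHom`s. -/
def IsEqToHomNat {X Y : Type u} [SmallCategory X] [SmallCategory Y] {F G : X ⥤ Y}
    (α : F ⟶ G) : Prop :=
  ∀ x, ∃ p : F.obj x = G.obj x, α.app x = eqToHom p

lemma isEqToHomNat_eqToHom {X Y : Type u} [SmallCategory X] [SmallCategory Y]
    {F G : X ⥤ Y} (h : F = G) : IsEqToHomNat (eqToHom h) :=
  fun x => ⟨Functor.congr_obj h x, eqToHom_app h x⟩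

/-- Transfer `Q`-membership along a field-wise equality of squares. -/
lemma q_transfer (Q : CatSquare.{u} → Prop) {A' A B' B : Type u}
    [SmallCategory A'] [SmallCategory A] [SmallCategory B'] [SmallCategory B]
    {u₁ u₂ : A ⥤ B} {u'₁ u'₂ : A' ⥤ B'} {v₁ v₂ : A' ⥤ A} {w₁ w₂ : B' ⥤ B}
    {α₁ : v₁ ⋙ u₁ ⟶ u'₁ ⋙ w₁} {α₂ : v₂ ⋙ u₂ ⟶ u'₂ ⋙ w₂}
    (hu : u₁ = u₂) (hu' : u'₁ = u'₂) (hv : v₁ = v₂) (hw : w₁ = w₂)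
    (h₁ : IsEqToHomNat α₁) (h₂ : IsEqToHomNat α₂)
    (hQ : Q ⟨u₁, u'₁, v₁, w₁, α₁⟩) : Q ⟨u₂, u'₂, v₂, w₂, α₂⟩ := by
  subst hu hu' hv hw
  obtain rfl : α₁ = α₂ := by
    ext x
    obtain ⟨p₁, e₁⟩ := h₁ x
    obtain ⟨p₂, e₂⟩ := h₂ x
    rw [e₁, e₂]
  exact hQ

def adjOfCatIso {X Y : Type u} [SmallCategory X] [SmallCategory Y] (F : X ⥤ Y) (G : Y ⥤ X)
    (h1 : F ⋙ G = 𝟭 X) (h2 : G ⋙ F = 𝟭 Y) : G ⊣ F where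
  unit := eqToHom h2.symm
  counit := eqToHom h1
  left_triangle_components y := by
    simp [eqToHom_app, eqToHom_map]
  right_triangle_components x := by
    simp [eqToHom_app, eqToHom_map]

end Helpers
section Helpers2

universe v₁ v₂ v₃ u₁ u₂ u₃

lemma comma_obj_ext {X : Type u₁} {Y : Type u₂} {Z : Type u₃}
    [Category.{v₁} X] [Category.{v₂} Y] [Category.{v₃} Z]
    {L : X ⥤ Z} {R : Y ⥤ Z} (a b : Comma L R)
    (h1 : a.left = b.left) (h2 : a.right = b.right)
    (h3 : a.hom = eqToHom (by rw [h1]) ≫ b.hom ≫ eqToHom (by rw [h2])) : a = b := by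
  obtain ⟨al, ar, ah⟩ := a
  obtain ⟨bl, br, bh⟩ := b
  dsimp at h1 h2
  subst h1; subst h2
  simp only [eqToHom_refl, Category.comp_id, Category.id_comp] at h3
  subst h3; rfl

variable {X Z Z' : Type u} [SmallCategory X] [SmallCategory Z] [SmallCategory Z']
  (G : X ⥤ Z) (J : Z ⥤ Z') (J' : Z' ⥤ Z)

/-- Forward comparison functor on coslices for a composition with a strict iso. -/
@[simps]
def cosliceFwd (h2 : J' ⋙ J = 𝟭 Z') (z' : Z') :
    StructuredArrow (J'.obj z') G ⥤ StructuredArrow z' (G ⋙ J) where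
  obj o := StructuredArrow.mk (eqToHom (Functor.congr_obj h2.symm z') ≫ J.map o.hom)
  map {o₁ o₂} r := StructuredArrow.homMk r.right (by
    have := StructuredArrow.w r
    dsimp
    rw [Category.assoc, ← J.map_comp, this])

/-- Backward comparison functor on coslices for a composition with a strict iso. -/
@[simps]
def cosliceBwd (h1 : J ⋙ J' = 𝟭 Z) (z' : Z') :
    StructuredArrow z' (G ⋙ J) ⥤ StructuredArrow (J'.obj z') G where
  obj o := StructuredArrow.mk (J'.map o.hom ≫ eqToHom (Functor.congr_obj h1 (G.obj o.right)))
  map {o₁ o₂} r := StructuredArrow.homMk r.right (by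
    have hw := StructuredArrow.w r
    have h3 := Functor.congr_hom h1 (G.map r.right)
    simp only [Functor.comp_map, Functor.id_map] at h3 hw
    have h4 : eqToHom (Functor.congr_obj h1 (G.obj o₁.right)) ≫ G.map r.right
        = J'.map (J.map (G.map r.right)) ≫
          eqToHom (Functor.congr_obj h1 (G.obj o₂.right)) := by
      rw [h3]; simp
    dsimp
    rw [Category.assoc, h4, ← Category.assoc, ← J'.map_comp, hw])

lemma coaspherical_comp {W : FunctorClass.{u}} (hW : IsWeakFundamentalLocalizer W)
    (h1 : J ⋙ J' = 𝟭 Z) (h2 : J' ⋙ J = 𝟭 Z')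
    (hG : IsCoasphericalFunctor W G) : IsCoasphericalFunctor W (G ⋙ J) := by
  intro z'
  refine aspherical_transfer hW (cosliceFwd G J J' h2 z') (cosliceBwd G J J' h1 z')
    ?_ ?_ (hG (J'.obj z'))
  · apply CategoryTheory.Functor.ext
    · intro o₁ o₂ r
      ext
      simp
      exact eqToHom_sandwich _ _ _
    · intro o
      apply comma_obj_ext
      · dsimp [cosliceFwd, cosliceBwd]
        have h4 := Functor.congr_hom h1 o.hom
        simp only [Functor.comp_map, Functor.id_map] at h4
        rw [J'.map_comp, eqToHom_map, h4]
        simp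
      · exact Subsingleton.elim _ _
      · rfl
  · apply CategoryTheory.Functor.ext
    · intro o₁ o₂ r
      ext
      simp
      exact eqToHom_sandwich _ _ _
    · intro o
      apply comma_obj_ext
      · dsimp [cosliceFwd, cosliceBwd]
        have h4 := Functor.congr_hom h2 o.hom
        simp only [Functor.comp_map, Functor.id_map] at h4
        rw [J.map_comp, eqToHom_map, h4]
        simp
      · exact Subsingleton.elim _ _
      · rfl

end Helpers2
section Helpers3

variable {A B : Type u} [SmallCategory A] [SmallCategory B]

/-- Universe-change functor from `CostructuredArrow u b` to the `Type u` comma category. -/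
@[simps]
def upComma (u : A ⥤ B) (b : B) : CostructuredArrow u b ⥤ Comma u (Functor.fromPUnit.{u} b) where
  obj x := ⟨x.left, ⟨⟨⟩⟩, x.hom⟩
  map {x y} f := ⟨f.left, 𝟙 _, by simp⟩

/-- Universe-change functor to `CostructuredArrow u b` from the `Type u` comma category. -/
@[simps]
def downComma (u : A ⥤ B) (b : B) : Comma u (Functor.fromPUnit.{u} b) ⥤ CostructuredArrow u b where
  obj x := CostructuredArrow.mk x.hom
  map {x y} f := CostructuredArrow.homMk f.left (by simp)

lemma upComma_downComma (u : A ⥤ B) (b : B) : upComma u b ⋙ downComma u b = 𝟭 _ := by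
  apply CategoryTheory.Functor.ext
  · intro x y f
    apply CommaMorphism.ext
    · dsimp [upComma, downComma]
      exact commaSandwich _ _ (by rfl) (by rfl) _
    · exact Subsingleton.elim _ _

lemma downComma_upComma (u : A ⥤ B) (b : B) : downComma u b ⋙ upComma u b = 𝟭 _ := by
  apply CategoryTheory.Functor.ext
  · intro x y f
    apply CommaMorphism.ext
    · dsimp [upComma, downComma]
      exact commaSandwich _ _ (by rfl) (by rfl) _
    · exact Subsingleton.elim _ _
  · intro x
    refine comma_obj_ext _ _ rfl (Subsingleton.elim _ _) ?_
    exact eqToHom_sandwich (by rfl) (by rfl) _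

/-- The fiber-to-comma functor `A_b ⥤ A/b` in the `Type u` comma model. -/
def mFun (u : A ⥤ B) (b : B) : CatFiber u b ⥤ Comma u (Functor.fromPUnit.{u} b) :=
  fiberToSlice u b ⋙ upComma u b

lemma mFun_coaspherical {W : FunctorClass.{u}} (hW : IsWeakFundamentalLocalizer W)
    (u : A ⥤ B) (b : B) (hu : IsProper W u) : IsCoasphericalFunctor W (mFun u b) :=
  coaspherical_comp (fiberToSlice u b) (upComma u b) (downComma u b) hW
    (upComma_downComma u b) (downComma_upComma u b) (hu b)

lemma mFun_isRightAdjoint (u : A ⥤ B) (b : B) (hu : IsPrecofibration u) :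
    (mFun u b).IsRightAdjoint := by
  obtain ⟨L₀, ⟨adj⟩⟩ := hu b
  exact ⟨downComma u b ⋙ L₀,
    ⟨(adjOfCatIso (upComma u b) (downComma u b) (upComma_downComma u b)
      (downComma_upComma u b)).comp adj⟩⟩

end Helpers3
section Helpers4

variable {A B B' : Type u} [SmallCategory A] [SmallCategory B] [SmallCategory B']

@[simp] lemma pbFst_obj (u : A ⥤ B) (w : B' ⥤ B) (x : CatPullback u w) :
    (pbFst u w).obj x = x.fst := rfl

@[simp] lemma pbSnd_obj (u : A ⥤ B) (w : B' ⥤ B) (x : CatPullback u w) :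
    (pbSnd u w).obj x = x.snd := rfl

@[simp] lemma pbFst_map (u : A ⥤ B) (w : B' ⥤ B) {x y : CatPullback u w} (f : x ⟶ y) :
    (pbFst u w).map f = f.1.1 := rfl

@[simp] lemma pbSnd_map (u : A ⥤ B) (w : B' ⥤ B) {x y : CatPullback u w} (f : x ⟶ y) :
    (pbSnd u w).map f = f.1.2 := rfl

@[simp] lemma catFiber_id_coe {F : A ⥤ B} {b : B} (x : CatFiber F b) :
    (𝟙 x : x ⟶ x).1 = 𝟙 x.obj := rfl

@[simp] lemma catFiber_comp_coe {F : A ⥤ B} {b : B} {x y z : CatFiber F b}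
    (f : x ⟶ y) (g : y ⟶ z) : (f ≫ g).1 = f.1 ≫ g.1 := rfl

@[simp] lemma catPullback_id_fst {u : A ⥤ B} {w : B' ⥤ B} (x : CatPullback u w) :
    (𝟙 x : x ⟶ x).1.1 = 𝟙 x.fst := rfl

@[simp] lemma catPullback_id_snd {u : A ⥤ B} {w : B' ⥤ B} (x : CatPullback u w) :
    (𝟙 x : x ⟶ x).1.2 = 𝟙 x.snd := rfl

@[simp] lemma catPullback_comp_fst {u : A ⥤ B} {w : B' ⥤ B} {x y z : CatPullback u w}
    (f : x ⟶ y) (g : y ⟶ z) : (f ≫ g).1.1 = f.1.1 ≫ g.1.1 := rfl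

@[simp] lemma catPullback_comp_snd {u : A ⥤ B} {w : B' ⥤ B} {x y z : CatPullback u w}
    (f : x ⟶ y) (g : y ⟶ z) : (f ≫ g).1.2 = f.1.2 ≫ g.1.2 := rfl

variable (u : A ⥤ B) (w : B' ⥤ B) (b' : B')

/-- The canonical functor from the fiber of `u` at `w.obj b'` to the comma category
`(B' ×_B A)/b'`. -/
@[simps]
def kFun : CatFiber u (w.obj b') ⥤ Comma (pbFst u w) (Functor.fromPUnit.{u} b') where
  obj x := ⟨⟨b', x.obj, x.eq.symm⟩, ⟨⟨⟩⟩, 𝟙 b'⟩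
  map {x y} f := ⟨⟨(𝟙 b', f.1), by simp [f.2]⟩, 𝟙 _, by dsimp⟩
  map_id x := by
    apply CommaMorphism.ext
    · exact Subtype.ext (Prod.ext (by simp) (by simp))
    · exact Subsingleton.elim _ _
  map_comp f g := by
    apply CommaMorphism.ext
    · exact Subtype.ext (Prod.ext (by simp) (by simp))
    · exact Subsingleton.elim _ _

/-- The canonical comparison functor from `(B' ×_B A)/b'` to `A/(w b')`. -/
@[simps]
def kAux : Comma (pbFst u w) (Functor.fromPUnit.{u} b') ⥤ CostructuredArrow u (w.obj b') where
  obj z := CostructuredArrow.mk (eqToHom z.left.eq.symm ≫ w.map z.hom)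
  map {z₁ z₂} f := CostructuredArrow.homMk f.left.1.2 (by
    have h1 := f.left.2
    have h2 := f.w
    dsimp at h1 h2 ⊢
    erw [Category.comp_id] at h2
    have h3 : u.map f.left.1.2 = eqToHom z₁.left.eq.symm ≫ w.map f.left.1.1 ≫
        eqToHom z₂.left.eq := by rw [h1]; simp
    rw [h3]
    simp only [Category.assoc, eqToHom_trans, eqToHom_refl, Category.comp_id]
    rw [eqToHom_trans_assoc, eqToHom_refl, Category.id_comp]
    erw [← w.map_comp, h2])
  map_id z := by
    apply CostructuredArrow.hom_ext
    rfl
  map_comp f g := by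
    apply CostructuredArrow.hom_ext
    rfl

lemma kHomB {z : Comma (pbFst u w) (Functor.fromPUnit.{u} b')} {x : CatFiber u (w.obj b')}
    (s : z ⟶ (kFun u w b').obj x) : s.left.1.1 = z.hom := by
  have h := s.w
  dsimp at h
  exact (Category.comp_id _).symm.trans (h.trans (Category.comp_id _))

/-- The hom equivalence underlying the comparison of `kFun` with the fiber-to-slice functor. -/
def kHomEquiv (z : Comma (pbFst u w) (Functor.fromPUnit.{u} b')) (x : CatFiber u (w.obj b')) :
    ((kAux u w b').obj z ⟶ (fiberToSlice u (w.obj b')).obj x) ≃ (z ⟶ (kFun u w b').obj x) where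
  toFun t :=
    { left := ⟨(z.hom, t.left), by
        have h0 := CostructuredArrow.w t
        dsimp [fiberToSlice] at h0 ⊢
        rw [comp_eqToHom_iff, Category.assoc]
        erw [h0]
        dsimp [kAux]
        erw [eqToHom_trans_assoc, eqToHom_refl, Category.id_comp]
        rfl⟩
      right := eqToHom (Subsingleton.elim _ _)
      w := by dsimp; rfl }
  invFun s := CostructuredArrow.homMk s.left.1.2 (by
    have h1 := s.left.2
    have hB := kHomB u w b' s
    dsimp [fiberToSlice] at h1 ⊢
    rw [hB] at h1
    have h4 : u.map s.left.1.2 = eqToHom z.left.eq.symm ≫ w.map z.hom ≫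
        eqToHom x.eq.symm := by erw [h1, eqToHom_trans_assoc, eqToHom_refl, Category.id_comp]
    erw [h4]
    dsimp [kAux]
    erw [Category.assoc, Category.assoc, eqToHom_trans, eqToHom_refl, Category.comp_id])
  left_inv t := by
    apply CostructuredArrow.hom_ext
    rfl
  right_inv s := by
    apply CommaMorphism.ext
    · exact Subtype.ext (Prod.ext (kHomB u w b' s).symm rfl)
    · exact Subsingleton.elim _ _

lemma kHomEquiv_natural_right {z : Comma (pbFst u w) (Functor.fromPUnit.{u} b')}
    {x x' : CatFiber u (w.obj b')} (t : (kAux u w b').obj z ⟶ (fiberToSlice u (w.obj b')).obj x)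
    (r : x ⟶ x') :
    kHomEquiv u w b' z x' (t ≫ (fiberToSlice u (w.obj b')).map r) =
      kHomEquiv u w b' z x t ≫ (kFun u w b').map r := by
  apply CommaMorphism.ext
  · refine Subtype.ext (Prod.ext ?_ ?_)
    · dsimp [kHomEquiv]
      simp
      exact (Category.comp_id _).symm
    · dsimp [kHomEquiv, fiberToSlice]
      rfl
  · exact Subsingleton.elim _ _

lemma kHomEquiv_symm_natural_left {z' z : Comma (pbFst u w) (Functor.fromPUnit.{u} b')}
    {x : CatFiber u (w.obj b')} (f : z' ⟶ z) (g : z ⟶ (kFun u w b').obj x) :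
    (kHomEquiv u w b' z' x).symm (f ≫ g) =
      (kAux u w b').map f ≫ (kHomEquiv u w b' z x).symm g := by
  apply CostructuredArrow.hom_ext
  dsimp [kHomEquiv]
  rfl

/-- Comparison functor from the coslice of the fiber-to-slice functor to the coslice of
`kFun`. -/
@[simps]
def kCosliceFwd (z : Comma (pbFst u w) (Functor.fromPUnit.{u} b')) :
    StructuredArrow ((kAux u w b').obj z) (fiberToSlice u (w.obj b')) ⥤
      StructuredArrow z (kFun u w b') where
  obj o := StructuredArrow.mk (Y := o.right) (kHomEquiv u w b' z o.right o.hom)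
  map {o₁ o₂} r := StructuredArrow.homMk r.right (by
    dsimp
    rw [← StructuredArrow.w r]
    exact (kHomEquiv_natural_right u w b' o₁.hom r.right).symm)

/-- Comparison functor from the coslice of `kFun` to the coslice of the fiber-to-slice
functor. -/
@[simps]
def kCosliceBwd (z : Comma (pbFst u w) (Functor.fromPUnit.{u} b')) :
    StructuredArrow z (kFun u w b') ⥤
      StructuredArrow ((kAux u w b').obj z) (fiberToSlice u (w.obj b')) where
  obj o := StructuredArrow.mk (Y := o.right) ((kHomEquiv u w b' z o.right).symm o.hom)
  map {o₁ o₂} r := StructuredArrow.homMk r.right (by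
    dsimp
    have h4 := kHomEquiv_natural_right u w b'
      ((kHomEquiv u w b' z o₁.right).symm o₁.hom) r.right
    simp only [Equiv.apply_symm_apply] at h4
    rw [StructuredArrow.w r] at h4
    exact ((Equiv.symm_apply_eq _).mpr h4.symm).symm)

lemma kFun_coaspherical {W : FunctorClass.{u}} (hW : IsWeakFundamentalLocalizer W)
    (hu : IsProper W u) : IsCoasphericalFunctor W (kFun u w b') := by
  intro z
  refine aspherical_transfer hW (kCosliceFwd u w b' z) (kCosliceBwd u w b' z) ?_ ?_
    (hu (w.obj b') ((kAux u w b').obj z))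
  · apply CategoryTheory.Functor.ext
    · intro o₁ o₂ r
      ext
      simp
      exact eqToHom_sandwich _ _ _
    · intro o
      refine comma_obj_ext _ _ (Subsingleton.elim _ _) rfl ?_
      simp [Equiv.symm_apply_apply]
      exact eqToHom_right' _ _
  · apply CategoryTheory.Functor.ext
    · intro o₁ o₂ r
      ext
      simp
      exact eqToHom_sandwich _ _ _
    · intro o
      refine comma_obj_ext _ _ (Subsingleton.elim _ _) rfl ?_
      simp [Equiv.apply_symm_apply]
      exact (Equiv.apply_symm_apply _ o.hom).trans (eqToHom_right' _ _)

lemma kFun_isRightAdjoint (hu : IsPrecofibration u) : (kFun u w b').IsRightAdjoint := by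
  obtain ⟨L₀, ⟨adj⟩⟩ := hu (w.obj b')
  refine ⟨kAux u w b' ⋙ L₀, ⟨Adjunction.mkOfHomEquiv
    { homEquiv := fun z x => (adj.homEquiv ((kAux u w b').obj z) x).trans (kHomEquiv u w b' z x)
      homEquiv_naturality_left_symm := by
        intro z' z x f g
        dsimp only [Functor.comp_obj, Functor.comp_map]
        rw [Equiv.symm_trans_apply, Equiv.symm_trans_apply, kHomEquiv_symm_natural_left]
        exact adj.homEquiv_naturality_left_symm _ _
      homEquiv_naturality_right := by
        intro z x x' t r
        dsimp only [Functor.comp_obj, Functor.comp_map]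
        rw [Equiv.trans_apply, Equiv.trans_apply]
        have h5 := adj.homEquiv_naturality_right t r
        rw [h5]
        exact kHomEquiv_natural_right u w b' ((adj.homEquiv _ x) t) r }⟩⟩

end Helpers4
section Core

lemma isEqToHomNat_id {X Y : Type u} [SmallCategory X] [SmallCategory Y] (F : X ⥤ Y) :
    IsEqToHomNat (𝟙 F) :=
  fun x => ⟨rfl, by simp⟩

lemma core_pullback {W : FunctorClass.{u}} (hW : IsWeakFundamentalLocalizer W)
    (Q : CatSquare.{u} → Prop)
    (cs1h : StableHComp Q)
    (cs2h : HorizontalDescent Q)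
    (ci2g : ∀ {A B : Type u} [SmallCategory A] [SmallCategory B] (F : A ⥤ B) (b : B),
      Q (commaObjSquare F b))
    {A B B' : Type u} [SmallCategory A] [SmallCategory B] [SmallCategory B']
    (u : A ⥤ B) (w : B' ⥤ B)
    (hk : ∀ b' : B', Q (starSquare (kFun u w b')))
    (hm : ∀ b' : B', Q (starSquare (mFun u (w.obj b')))) :
    Q ⟨u, pbFst u w, pbSnd u w, w, eqToHom (pb_comm u w)⟩ := by
  apply cs2h u (pbFst u w) (pbSnd u w) w (eqToHom (pb_comm u w)) B'
    (fun j => Comma (pbFst u w) (Functor.fromPUnit.{u} j)) (fun _ => PtCat.{u})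
    (fun j => Comma.snd _ _) (fun j => Comma.fst _ _) (fun j => Functor.fromPUnit.{u} j)
    (fun j => Comma.natTrans _ _)
  · intro p
    exact ⟨p, ⟨⟨⟩⟩, rfl⟩
  · intro j
    exact ci2g (pbFst u w) j
  · intro j
    -- second descent, along the fiber.
    apply cs2h _ _ _ _ _ PUnit.{u + 1} (fun _ => CatFiber u (w.obj j)) (fun _ => PtCat.{u})
      (fun _ => Functor.star _) (fun _ => kFun u w j) (fun _ => 𝟭 PtCat.{u})
      (fun _ => eqToHom (toPt_eq _ _))
    · intro p
      exact ⟨⟨⟩, p, rfl⟩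
    · intro _
      refine q_transfer Q (toPt_eq _ _) rfl rfl rfl (isEqToHomNat_id _)
        (isEqToHomNat_eqToHom _) (hk j)
    · intro _
      have step1 := cs1h u (Comma.snd u (Functor.fromPUnit.{u} (w.obj j)))
        (Functor.star (CatFiber u (w.obj j)))
        (Comma.fst u (Functor.fromPUnit.{u} (w.obj j))) (Functor.fromPUnit.{u} (w.obj j))
        (mFun u (w.obj j)) (𝟭 PtCat.{u})
        (Comma.natTrans _ _) (eqToHom (toPt_eq _ _))
        (ci2g u (w.obj j))
        (q_transfer Q (toPt_eq _ _) rfl rfl rfl (isEqToHomNat_id _)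
          (isEqToHomNat_eqToHom _) (hm j))
      refine q_transfer Q rfl rfl ?_ ?_ ?_ ?_ step1
      · rfl
      · apply CategoryTheory.Functor.ext
        · intro X Y f
          simp
        · intro X
          rfl
      · intro x
        refine ⟨x.eq, ?_⟩
        simp [hcomp2cell, mFun, upComma, fiberToSlice, eqToHom_app]
      · intro x
        refine ⟨x.eq, ?_⟩
        simp [hcomp2cell, eqToHom_app]
        erw [w.map_id, Category.comp_id]
        rfl

end Core
section Final

lemma transfer_pullback (Q : CatSquare.{u} → Prop)
    (hiso : ∀ S T : CatSquare.{u}, S.Isomorphic T → Q S → Q T)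
    {A A' B B' : Type u} [SmallCategory A] [SmallCategory A'] [SmallCategory B]
    [SmallCategory B'] (u : A ⥤ B) (u' : A' ⥤ B') (v : A' ⥤ A) (w : B' ⥤ B)
    (h : v ⋙ u = u' ⋙ w) (hIso : IsCatIso (toPullback u u' v w h))
    (hQ : Q ⟨u, pbFst u w, pbSnd u w, w, eqToHom (pb_comm u w)⟩) :
    Q ⟨u, u', v, w, eqToHom h⟩ := by
  obtain ⟨ρ, hρ1, hρ2⟩ := hIso
  refine hiso _ _ ?_ hQ
  have e1 : toPullback u u' v w h ⋙ pbSnd u w = v := rfl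
  have e2 : toPullback u u' v w h ⋙ pbFst u w = u' := rfl
  refine ⟨ρ, 𝟭 A, 𝟭 B', 𝟭 B, ⟨toPullback u u' v w h, hρ2, hρ1⟩, ⟨𝟭 A, rfl, rfl⟩,
    ⟨𝟭 B', rfl, rfl⟩, ⟨𝟭 B, rfl, rfl⟩, ?_, ?_, ?_, ?_, ?_⟩
  · show pbSnd u w ⋙ 𝟭 A = ρ ⋙ v
    rw [Functor.comp_id]
    conv_rhs => rw [← e1]
    rw [← Functor.assoc, hρ2, Functor.id_comp]
  · show u ⋙ 𝟭 B = 𝟭 A ⋙ u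
    rw [Functor.comp_id, Functor.id_comp]
  · show pbFst u w ⋙ 𝟭 B' = ρ ⋙ u'
    rw [Functor.comp_id]
    conv_rhs => rw [← e2]
    rw [← Functor.assoc, hρ2, Functor.id_comp]
  · show w ⋙ 𝟭 B = 𝟭 B' ⋙ w
    rw [Functor.comp_id, Functor.id_comp]
  · ext x
    simp [eqToHom_app]
    erw [eqToHom_trans, eqToHom_trans]

end Final
theorem statement17 (W : FunctorClass.{u}) (hW : IsWeakFundamentalLocalizer W)
    (Q : CatSquare.{u} → Prop)
    (hiso : ∀ S T : CatSquare.{u}, S.Isomorphic T → Q S → Q T)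
    (cs1h : StableHComp Q)
    (cs2h : HorizontalDescent Q)
    (ci2g : ∀ {A B : Type u} [SmallCategory A] [SmallCategory B] (F : A ⥤ B) (b : B),
      Q (commaObjSquare F b)) :
    ((∀ {A B : Type u} [SmallCategory A] [SmallCategory B] (F : A ⥤ B),
        IsCoasphericalFunctor W F → Q (starSquare F)) →
      ∀ {A A' B B' : Type u} [SmallCategory A] [SmallCategory A'] [SmallCategory B]
        [SmallCategory B'] (u : A ⥤ B) (u' : A' ⥤ B') (v : A' ⥤ A) (w : B' ⥤ B)
        (h : v ⋙ u = u' ⋙ w), IsCatIso (toPullback u u' v w h) → IsProper W u →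
        Q ⟨u, u', v, w, eqToHom h⟩)
    ∧ ((∀ {A B : Type u} [SmallCategory A] [SmallCategory B] (F : A ⥤ B),
        F.IsRightAdjoint → Q (starSquare F)) →
      ∀ {A A' B B' : Type u} [SmallCategory A] [SmallCategory A'] [SmallCategory B]
        [SmallCategory B'] (u : A ⥤ B) (u' : A' ⥤ B') (v : A' ⥤ A) (w : B' ⥤ B)
        (h : v ⋙ u = u' ⋙ w), IsCatIso (toPullback u u' v w h) → IsPrecofibration u →
        Q ⟨u, u', v, w, eqToHom h⟩) := by
  constructor
  · intro ci1 A A' B B' iA iA' iB iB' u u' v w h hIso hP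
    refine transfer_pullback Q hiso u u' v w h hIso ?_
    refine core_pullback hW Q cs1h cs2h (fun {A B} _ _ F b => ci2g F b) u w ?_ ?_
    · intro b'
      exact ci1 (kFun u w b') (kFun_coaspherical u w b' hW hP)
    · intro b'
      exact ci1 (mFun u (w.obj b')) (mFun_coaspherical hW u (w.obj b') hP)
  · intro ci1 A A' B B' iA iA' iB iB' u u' v w h hIso hP
    refine transfer_pullback Q hiso u u' v w h hIso ?_
    refine core_pullback hW Q cs1h cs2h (fun {A B} _ _ F b => ci2g F b) u w ?_ ?_
    · intro b'
      exact ci1 (kFun u w b') (kFun_isRightAdjoint u w b' hP)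
    · intro b'
      exact ci1 (mFun u (w.obj b')) (mFun_isRightAdjoint u (w.obj b') hP)

end Paper
end
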